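/- (Theorem 3.3, defocusing reduction q = −conj(r), theta-function form) Assume conj(Γ) = 𝒫 − Γ, where 𝒫 is the g×g matrix with entries 𝒫_{jk} = 1 − δ_{jk}. Fix k ∈ {1,…,g} and let ε_k be the k-th standard basis vector. Let Z, Q, T ∈ ℂ^g and n, m ∈ ℤ^g satisfy conj(Z) + conj(Q) = Z + n + Γm, 2·Re(T) = ε_k, and suppose the k-th component m_k of m is odd; set Y = Z + T + Q. Let V, W ∈ ℂ^g be real vectors, i.e. conj(V) = V and conj(W) = W, and let e, ω, φ ∈ ℝ. Assume θ(Z) ≠ 0 and θ(Z−T) ≠ 0, and set q₀ = (θ(Z−T)/θ(Z))·exp(−π⟨m, Im T⟩ + iφ). For real x, t put u = Vx + Wt and define q(x,t) = q₀ · (θ(Z)/θ(Z−T)) · (θ(Z−T+u)/θ(Z+u)) · exp(i(ex+ωt)) and r(x,t) = q₀⁻¹ · (θ(Z−T)/θ(Z)) · (θ(Y+u)/θ(Y−T+u)) · exp(−i(ex+ωt)). Then for all real x, t such that θ(Z+u) ≠ 0 and θ(Y−T+u) ≠ 0, one has q(x,t) = −conj(r(x,t)). -/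

import Mathlib

set_option maxHeartbeats 1000000

open scoped BigOperators

/-- The Riemann theta function `θ(z) = Σ_{m ∈ ℤ^g} exp(2πi⟨m,z⟩ + πi⟨m,Γm⟩)`. -/
noncomputable def theta {g : ℕ} (Γ : Matrix (Fin g) (Fin g) ℂ) (z : Fin g → ℂ) : ℂ :=
  ∑' m : Fin g → ℤ,
    Complex.exp (2 * Real.pi * Complex.I * (∑ j, (m j : ℂ) * z j)
      + Real.pi * Complex.I * (∑ j, (m j : ℂ) * ∑ k, Γ j k * (m k : ℂ)))

lemma exp_two_pi_int (K : ℤ) : Complex.exp (2 * Real.pi * Complex.I * K) = 1 := by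
  rw [show (2 * (Real.pi:ℂ) * Complex.I * K) = (K:ℂ) * (2 * Real.pi * Complex.I) by ring]
  exact Complex.exp_int_mul_two_pi_mul_I K

lemma bilin_swap {g : ℕ} (Γ : Matrix (Fin g) (Fin g) ℂ) (hΓ : Γ.IsSymm) (a b : Fin g → ℂ) :
    ∑ j, a j * ∑ k, Γ j k * b k = ∑ j, b j * ∑ k, Γ j k * a k := by
  simp only [Finset.mul_sum]
  rw [Finset.sum_comm]
  exact Finset.sum_congr rfl fun j _ => Finset.sum_congr rfl fun i _ => by
    rw [hΓ.apply i j]; ring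

lemma theta_conj {g : ℕ} (Γ : Matrix (Fin g) (Fin g) ℂ)
    (hΓconj : ∀ j k, starRingEnd ℂ (Γ j k) = (if j = k then 0 else 1) - Γ j k)
    (z : Fin g → ℂ) :
    starRingEnd ℂ (theta Γ z) = theta Γ (fun j => starRingEnd ℂ (z j)) := by
  rw [theta, theta, starRingEnd_apply, tsum_star, ← Equiv.tsum_eq (Equiv.neg (Fin g → ℤ))]
  refine tsum_congr fun m => ?_
  rw [← starRingEnd_apply, ← Complex.exp_conj]
  simp only [Equiv.neg_apply, Pi.neg_apply, Int.cast_neg]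
  set S : ℂ := ∑ k, (m k : ℂ) with hS
  have hL : (∑ j, -(m j:ℂ) * starRingEnd ℂ (z j))
      = -∑ j, (m j:ℂ) * starRingEnd ℂ (z j) := by
    rw [← Finset.sum_neg_distrib]; exact Finset.sum_congr rfl fun j _ => by ring
  have hQ : (∑ j, -(m j:ℂ) * ∑ k, ((if j = k then (0:ℂ) else 1) - Γ j k) * -(m k : ℂ))
      = ∑ j, (m j:ℂ) * ∑ k, ((if j = k then (0:ℂ) else 1) - Γ j k) * (m k : ℂ) := by
    refine Finset.sum_congr rfl fun j _ => ?_
    rw [show (∑ k, ((if j = k then (0:ℂ) else 1) - Γ j k) * -(m k : ℂ))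
        = -∑ k, ((if j = k then (0:ℂ) else 1) - Γ j k) * (m k : ℂ) by
      rw [← Finset.sum_neg_distrib]; exact Finset.sum_congr rfl fun i _ => by ring]
    ring
  have hc : (starRingEnd ℂ) (2 * Real.pi * Complex.I * (∑ j, -(m j : ℂ) * z j)
      + Real.pi * Complex.I * (∑ j, -(m j : ℂ) * ∑ k, Γ j k * -(m k : ℂ)))
      = 2 * Real.pi * Complex.I * (∑ j, (m j : ℂ) * starRingEnd ℂ (z j))
        - Real.pi * Complex.I * (∑ j, (m j : ℂ) * ∑ k,
            ((if j = k then (0:ℂ) else 1) - Γ j k) * (m k : ℂ)) := by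
    simp only [map_add, map_mul, map_sum, map_ofNat, Complex.conj_ofReal, Complex.conj_I,
      map_intCast, map_neg, hΓconj, map_sub]
    rw [hL, hQ]
    ring
  rw [hc]
  have hsplit : ∀ j, (∑ k, ((if j = k then (0:ℂ) else 1) - Γ j k) * (m k : ℂ))
      = (S - (m j : ℂ)) - ∑ k, Γ j k * (m k : ℂ) := by
    intro j
    have h0 : ∀ k ∈ Finset.univ, ((if j = k then (0:ℂ) else 1) - Γ j k) * (m k : ℂ)
        = ((m k : ℂ) - (if j = k then (m k : ℂ) else 0)) - Γ j k * (m k : ℂ) := by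
      intro k _; split <;> ring
    rw [Finset.sum_congr rfl h0, Finset.sum_sub_distrib, Finset.sum_sub_distrib,
      Finset.sum_ite_eq]
    simp [hS]
  have hsplit2 : (∑ j, (m j : ℂ) * ∑ k, ((if j = k then (0:ℂ) else 1) - Γ j k) * (m k : ℂ))
      = (((∑ j, m j)^2 - ∑ j, (m j)^2 : ℤ) : ℂ)
        - ∑ j, (m j : ℂ) * ∑ k, Γ j k * (m k : ℂ) := by
    rw [Finset.sum_congr rfl (fun j _ => by rw [hsplit j])]
    have h1 : ∀ j ∈ Finset.univ, (m j : ℂ) * ((S - (m j:ℂ)) - ∑ k, Γ j k * (m k : ℂ))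
        = ((m j : ℂ) * S - (m j:ℂ)^2) - (m j : ℂ) * ∑ k, Γ j k * (m k : ℂ) := by
      intro j _; ring
    rw [Finset.sum_congr rfl h1, Finset.sum_sub_distrib, Finset.sum_sub_distrib]
    push_cast
    rw [← Finset.sum_mul, sq (∑ j, (m j : ℂ))]
  rw [hsplit2]
  obtain ⟨K, hK⟩ : (2:ℤ) ∣ ((∑ j, m j)^2 - ∑ j, (m j)^2) := by
    have hsq : ∀ x : ZMod 2, x^2 = x := by decide
    have h2 : ((((∑ j, m j)^2 - ∑ j, (m j)^2 : ℤ)) : ZMod 2) = 0 := by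
      push_cast
      rw [hsq]
      rw [Finset.sum_congr rfl (fun j _ => hsq ((m j : ZMod 2)))]
      ring
    exact_mod_cast (ZMod.intCast_zmod_eq_zero_iff_dvd _ 2).mp h2
  have hfin : 2 * (Real.pi:ℂ) * Complex.I * (∑ j, (m j : ℂ) * starRingEnd ℂ (z j))
      - Real.pi * Complex.I * ((((∑ j, m j)^2 - ∑ j, (m j)^2 : ℤ) : ℂ)
        - ∑ j, (m j : ℂ) * ∑ k, Γ j k * (m k : ℂ))
      = 2 * Real.pi * Complex.I * ((-K : ℤ) : ℂ)
        + (2 * Real.pi * Complex.I * (∑ j, (m j : ℂ) * starRingEnd ℂ (z j))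
          + Real.pi * Complex.I * (∑ j, (m j : ℂ) * ∑ k, Γ j k * (m k : ℂ))) := by
    have hKC : (((∑ j, m j)^2 - ∑ j, (m j)^2 : ℤ) : ℂ) = 2 * (K : ℂ) := by
      rw [hK]; push_cast; ring
    rw [hKC]; push_cast; ring
  rw [hfin, Complex.exp_add, exp_two_pi_int, one_mul]

lemma theta_shift {g : ℕ} (Γ : Matrix (Fin g) (Fin g) ℂ) (hΓ : Γ.IsSymm)
    (z : Fin g → ℂ) (n m : Fin g → ℤ) :
    theta Γ (fun j => z j + (n j : ℂ) + ∑ k, Γ j k * (m k : ℂ))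
      = Complex.exp (-(2 * Real.pi * Complex.I) * (∑ j, (m j:ℂ) * z j)
          - Real.pi * Complex.I * (∑ j, (m j:ℂ) * ∑ k, Γ j k * (m k:ℂ))) * theta Γ z := by
  rw [theta, theta, ← tsum_mul_left, ← Equiv.tsum_eq (Equiv.subRight m)]
  refine tsum_congr fun p => ?_
  simp only [Equiv.subRight_apply, Pi.sub_apply, Int.cast_sub]
  rw [← Complex.exp_add]
  have hinner : ∀ j, (∑ k, Γ j k * ((p k : ℂ) - (m k : ℂ)))
      = (∑ k, Γ j k * (p k : ℂ)) - ∑ k, Γ j k * (m k : ℂ) := by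
    intro j; rw [← Finset.sum_sub_distrib]; exact Finset.sum_congr rfl fun _ _ => by ring
  have h1 : (∑ j, ((p j : ℂ) - (m j : ℂ)) * (z j + (n j : ℂ) + ∑ k, Γ j k * (m k : ℂ)))
      = (∑ j, (p j:ℂ) * z j) - (∑ j, (m j:ℂ) * z j)
        + (∑ j, ((p j:ℂ) - (m j:ℂ)) * (n j:ℂ))
        + (∑ j, (p j:ℂ) * ∑ k, Γ j k * (m k:ℂ))
        - (∑ j, (m j:ℂ) * ∑ k, Γ j k * (m k:ℂ)) := by
    rw [← Finset.sum_sub_distrib, ← Finset.sum_add_distrib, ← Finset.sum_add_distrib,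
      ← Finset.sum_sub_distrib]
    exact Finset.sum_congr rfl fun j _ => by ring
  have h2 : (∑ j, ((p j : ℂ) - (m j : ℂ)) * ∑ k, Γ j k * ((p k:ℂ) - (m k:ℂ)))
      = (∑ j, (p j:ℂ) * ∑ k, Γ j k * (p k:ℂ))
        - 2 * (∑ j, (p j:ℂ) * ∑ k, Γ j k * (m k:ℂ))
        + (∑ j, (m j:ℂ) * ∑ k, Γ j k * (m k:ℂ)) := by
    have h3 : (∑ j, ((p j : ℂ) - (m j : ℂ)) * ∑ k, Γ j k * ((p k:ℂ) - (m k:ℂ)))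
        = (∑ j, (p j:ℂ) * ∑ k, Γ j k * (p k:ℂ))
          - (∑ j, (p j:ℂ) * ∑ k, Γ j k * (m k:ℂ))
          - (∑ j, (m j:ℂ) * ∑ k, Γ j k * (p k:ℂ))
          + (∑ j, (m j:ℂ) * ∑ k, Γ j k * (m k:ℂ)) := by
      rw [← Finset.sum_sub_distrib, ← Finset.sum_sub_distrib, ← Finset.sum_add_distrib]
      refine Finset.sum_congr rfl fun j _ => ?_
      rw [hinner j]; ring
    rw [h3, bilin_swap Γ hΓ (fun j => (m j:ℂ)) (fun j => (p j:ℂ))]; ring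
  have key : 2 * (Real.pi:ℂ) * Complex.I
        * (∑ j, ((p j:ℂ) - (m j:ℂ)) * (z j + (n j : ℂ) + ∑ k, Γ j k * (m k : ℂ)))
      + Real.pi * Complex.I * (∑ j, ((p j:ℂ) - (m j:ℂ)) * ∑ k, Γ j k * ((p k:ℂ) - (m k:ℂ)))
      = 2 * Real.pi * Complex.I * ((∑ j, (p j - m j) * n j : ℤ) : ℂ)
        + (-(2 * Real.pi * Complex.I) * (∑ j, (m j:ℂ) * z j)
            - Real.pi * Complex.I * (∑ j, (m j:ℂ) * ∑ k, Γ j k * (m k:ℂ))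
          + (2 * Real.pi * Complex.I * (∑ j, (p j:ℂ) * z j)
            + Real.pi * Complex.I * (∑ j, (p j:ℂ) * ∑ k, Γ j k * (p k:ℂ)))) := by
    rw [h1, h2]
    push_cast
    ring
  rw [key, Complex.exp_add, exp_two_pi_int, one_mul, Complex.exp_add]

/-- (Theorem 3.3, defocusing reduction `q = −conj r` in theta-function form.)
Under `conj Γ = 𝒫 − Γ` with `𝒫_{jk} = 1 − δ_{jk}`, the constraint
`conj Z + conj Q = Z + n + Γm` with `2·Re T = ε_k` and `m_k` odd,
`Y = Z + T + Q`, real frequency vectors `V, W`, and the choice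
`q₀ = (θ(Z−T)/θ(Z))·exp(−π⟨m, Im T⟩ + iφ)` of initial value, the
theta-function expressions `q(x,t)` and `r(x,t)` of (1.27)–(1.28) satisfy
`q(x,t) = −conj (r(x,t))` wherever the denominators do not vanish. -/
theorem defocusing_reduction (g : ℕ) (hg : 0 < g) (Γ : Matrix (Fin g) (Fin g) ℂ)
    (hΓsymm : Γ.IsSymm) (hΓim : (Γ.map Complex.im).PosDef)
    (hΓconj : ∀ j k, starRingEnd ℂ (Γ j k) = (if j = k then 0 else 1) - Γ j k)
    (k : Fin g) (Z Q T : Fin g → ℂ) (n m : Fin g → ℤ)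
    (hZQ : (fun j => starRingEnd ℂ (Z j) + starRingEnd ℂ (Q j))
        = Z + (fun j => (n j : ℂ)) + Γ.mulVec (fun j => (m j : ℂ)))
    (hT : ∀ j, 2 * (T j).re = if j = k then 1 else 0)
    (hmk : Odd (m k))
    (Y : Fin g → ℂ) (hY : Y = Z + T + Q)
    (V W : Fin g → ℂ)
    (hV : ∀ j, starRingEnd ℂ (V j) = V j)
    (hW : ∀ j, starRingEnd ℂ (W j) = W j)
    (e ω φ : ℝ)
    (hθZ : theta Γ Z ≠ 0) (hθZT : theta Γ (Z - T) ≠ 0)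
    (q₀ : ℂ)
    (hq₀ : q₀ = theta Γ (Z - T) / theta Γ Z
        * Complex.exp (-((Real.pi * ∑ j, (m j : ℝ) * (T j).im : ℝ) : ℂ)
            + Complex.I * (φ : ℂ))) :
    ∀ x t : ℝ,
      theta Γ (Z + fun j => V j * (x : ℂ) + W j * (t : ℂ)) ≠ 0 →
      theta Γ (Y - T + fun j => V j * (x : ℂ) + W j * (t : ℂ)) ≠ 0 →
      q₀ * (theta Γ Z / theta Γ (Z - T))
          * (theta Γ (Z - T + fun j => V j * (x : ℂ) + W j * (t : ℂ))
              / theta Γ (Z + fun j => V j * (x : ℂ) + W j * (t : ℂ)))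
          * Complex.exp (Complex.I * ((e : ℂ) * (x : ℂ) + (ω : ℂ) * (t : ℂ)))
        = -starRingEnd ℂ
            (q₀⁻¹ * (theta Γ (Z - T) / theta Γ Z)
              * (theta Γ (Y + fun j => V j * (x : ℂ) + W j * (t : ℂ))
                  / theta Γ (Y - T + fun j => V j * (x : ℂ) + W j * (t : ℂ)))
              * Complex.exp (-(Complex.I * ((e : ℂ) * (x : ℂ) + (ω : ℂ) * (t : ℂ))))) := by
  intro x t hθZu hθYTu
  have hconjT : ∀ j, starRingEnd ℂ (T j) = (if j = k then (1:ℂ) else 0) - T j := by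
    intro j
    have h := hT j
    have h2 : (starRingEnd ℂ) (T j) = ((2 * (T j).re : ℝ) : ℂ) - T j := by
      apply Complex.ext <;> simp <;> ring
    rw [h2, h]
    split_ifs <;> simp
  have hZQ' : ∀ j, starRingEnd ℂ (Z j) + starRingEnd ℂ (Q j)
      = Z j + (n j : ℂ) + ∑ k', Γ j k' * (m k' : ℂ) := by
    intro j
    have h := congrFun hZQ j
    simpa [Matrix.mulVec, dotProduct] using h
  have hu : ∀ j, starRingEnd ℂ (V j * (x:ℂ) + W j * (t:ℂ)) = V j * (x:ℂ) + W j * (t:ℂ) := by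
    intro j
    simp [map_add, map_mul, hV j, hW j, Complex.conj_ofReal]
  have hf1 : (fun j => starRingEnd ℂ ((Y - T + fun j => V j * (x:ℂ) + W j * (t:ℂ)) j))
      = fun j => (Z + fun j => V j * (x:ℂ) + W j * (t:ℂ)) j + (n j : ℂ)
          + ∑ k', Γ j k' * (m k' : ℂ) := by
    funext j
    simp only [Pi.add_apply, Pi.sub_apply, hY, map_add, map_sub, map_mul, hV j, hW j,
      Complex.conj_ofReal]
    linear_combination hZQ' j
  have hf2 : (fun j => starRingEnd ℂ ((Y + fun j => V j * (x:ℂ) + W j * (t:ℂ)) j))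
      = fun j => (Z - T + fun j => V j * (x:ℂ) + W j * (t:ℂ)) j
          + ((n j + (if j = k then 1 else 0) : ℤ) : ℂ) + ∑ k', Γ j k' * (m k' : ℂ) := by
    funext j
    simp only [Pi.add_apply, Pi.sub_apply, hY, map_add, map_mul, hV j, hW j,
      Complex.conj_ofReal]
    rw [hconjT j]
    have hcast : ((n j + (if j = k then 1 else 0) : ℤ) : ℂ)
        = (n j : ℂ) + (if j = k then (1:ℂ) else 0) := by
      push_cast [apply_ite (Int.cast : ℤ → ℂ)]
      rfl
    rw [hcast]
    linear_combination hZQ' j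
  have e1 : starRingEnd ℂ (theta Γ (Y - T + fun j => V j * (x:ℂ) + W j * (t:ℂ)))
      = Complex.exp (-(2 * Real.pi * Complex.I)
            * (∑ j, (m j:ℂ) * (Z + fun j => V j * (x:ℂ) + W j * (t:ℂ)) j)
          - Real.pi * Complex.I * (∑ j, (m j:ℂ) * ∑ k', Γ j k' * (m k':ℂ)))
        * theta Γ (Z + fun j => V j * (x:ℂ) + W j * (t:ℂ)) := by
    rw [theta_conj Γ hΓconj, hf1, theta_shift Γ hΓsymm]
  have e2 : starRingEnd ℂ (theta Γ (Y + fun j => V j * (x:ℂ) + W j * (t:ℂ)))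
      = Complex.exp (-(2 * Real.pi * Complex.I)
            * (∑ j, (m j:ℂ) * (Z - T + fun j => V j * (x:ℂ) + W j * (t:ℂ)) j)
          - Real.pi * Complex.I * (∑ j, (m j:ℂ) * ∑ k', Γ j k' * (m k':ℂ)))
        * theta Γ (Z - T + fun j => V j * (x:ℂ) + W j * (t:ℂ)) := by
    rw [theta_conj Γ hΓconj, hf2, theta_shift Γ hΓsymm _ (fun j => n j + (if j = k then 1 else 0)) m]
  have hE : starRingEnd ℂ (Complex.exp (-(Complex.I * ((e:ℂ) * (x:ℂ) + (ω:ℂ) * (t:ℂ)))))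
      = Complex.exp (Complex.I * ((e:ℂ) * (x:ℂ) + (ω:ℂ) * (t:ℂ))) := by
    rw [← Complex.exp_conj]
    congr 1
    simp only [map_neg, map_mul, map_add, Complex.conj_I, Complex.conj_ofReal]
    ring
  have hq0exp : starRingEnd ℂ (Complex.exp
        (-((Real.pi * ∑ j, (m j : ℝ) * (T j).im : ℝ) : ℂ) + Complex.I * (φ : ℂ)))
      = Complex.exp (-((Real.pi * ∑ j, (m j : ℝ) * (T j).im : ℝ) : ℂ) - Complex.I * (φ : ℂ)) := by
    rw [← Complex.exp_conj]
    congr 1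
    simp only [map_add, map_neg, map_mul, Complex.conj_I, Complex.conj_ofReal]
    ring
  have hA : theta Γ (fun j => starRingEnd ℂ ((Z - T) j)) ≠ 0 := by
    rw [← theta_conj Γ hΓconj]
    exact (map_ne_zero (starRingEnd ℂ)).mpr hθZT
  have hB : theta Γ (fun j => starRingEnd ℂ (Z j)) ≠ 0 := by
    rw [← theta_conj Γ hΓconj]
    exact (map_ne_zero (starRingEnd ℂ)).mpr hθZ
  have hsum_split : (∑ j, (m j:ℂ) * (Z - T + fun j => V j * (x:ℂ) + W j * (t:ℂ)) j)
      = (∑ j, (m j:ℂ) * (Z + fun j => V j * (x:ℂ) + W j * (t:ℂ)) j) - ∑ j, (m j:ℂ) * T j := by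
    rw [← Finset.sum_sub_distrib]
    refine Finset.sum_congr rfl fun j _ => ?_
    simp only [Pi.add_apply, Pi.sub_apply]
    ring
  have hsumT : (∑ j, (m j:ℂ) * T j)
      = (m k : ℂ)/2 + Complex.I * ((∑ j, (m j:ℝ) * (T j).im : ℝ) : ℂ) := by
    have h1 : ∀ j ∈ Finset.univ, (m j : ℂ) * T j
        = (if j = k then (m j : ℂ)/2 else 0) + Complex.I * (((m j:ℝ) * (T j).im : ℝ) : ℂ) := by
      intro j _
      have hre := hT j
      conv_lhs => rw [← Complex.re_add_im (T j)]
      split_ifs with h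
      · rw [if_pos h] at hre
        have h2 : (T j).re = 1/2 := by linarith
        rw [h2]; push_cast; ring
      · rw [if_neg h] at hre
        have h2 : (T j).re = 0 := by linarith
        rw [h2]; push_cast; ring
    rw [Finset.sum_congr rfl h1, Finset.sum_add_distrib, Finset.sum_ite_eq' Finset.univ k]
    simp only [Finset.mem_univ, if_true]
    congr 1
    push_cast
    rw [Finset.mul_sum]
  have hkey :
      Complex.exp (-((Real.pi * ∑ j, (m j : ℝ) * (T j).im : ℝ):ℂ) + Complex.I * (φ:ℂ))
        * Complex.exp (-((Real.pi * ∑ j, (m j : ℝ) * (T j).im : ℝ):ℂ) - Complex.I * (φ:ℂ))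
        * Complex.exp (-(2 * Real.pi * Complex.I)
              * ∑ j, (m j:ℂ) * (Z + fun j => V j * (x:ℂ) + W j * (t:ℂ)) j
            - Real.pi * Complex.I * ∑ j, (m j:ℂ) * ∑ k', Γ j k' * (m k':ℂ))
      = -Complex.exp (-(2 * Real.pi * Complex.I)
              * ∑ j, (m j:ℂ) * (Z - T + fun j => V j * (x:ℂ) + W j * (t:ℂ)) j
            - Real.pi * Complex.I * ∑ j, (m j:ℂ) * ∑ k', Γ j k' * (m k':ℂ)) := by
    obtain ⟨l, hl⟩ := hmk
    rw [hsum_split, hsumT]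
    have hR : -(2 * (Real.pi:ℂ) * Complex.I)
          * ((∑ j, (m j:ℂ) * (Z + fun j => V j * (x:ℂ) + W j * (t:ℂ)) j)
              - ((m k : ℂ)/2 + Complex.I * ((∑ j, (m j:ℝ) * (T j).im : ℝ) : ℂ)))
          - Real.pi * Complex.I * ∑ j, (m j:ℂ) * ∑ k', Γ j k' * (m k':ℂ)
        = (l:ℂ) * (2 * Real.pi * Complex.I) + Real.pi * Complex.I
          + (-((Real.pi * ∑ j, (m j : ℝ) * (T j).im : ℝ):ℂ) + Complex.I * (φ:ℂ)
            + (-((Real.pi * ∑ j, (m j : ℝ) * (T j).im : ℝ):ℂ) - Complex.I * (φ:ℂ))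
            + (-(2 * Real.pi * Complex.I)
                * ∑ j, (m j:ℂ) * (Z + fun j => V j * (x:ℂ) + W j * (t:ℂ)) j
              - Real.pi * Complex.I * ∑ j, (m j:ℂ) * ∑ k', Γ j k' * (m k':ℂ))) := by
      rw [hl]
      push_cast
      linear_combination (2 * (Real.pi:ℂ) * ∑ j, (m j:ℂ) * ((T j).im : ℂ)) * Complex.I_mul_I
    rw [hR]
    simp only [Complex.exp_add]
    rw [Complex.exp_int_mul_two_pi_mul_I, Complex.exp_pi_mul_I]
    ring
  rw [hq₀]
  simp only [map_mul, map_inv₀, map_div₀, e1, e2, theta_conj Γ hΓconj Z,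
    theta_conj Γ hΓconj (Z - T), hE, hq0exp]
  set θ1 := theta Γ Z with hθ1d
  set θ2 := theta Γ (Z - T) with hθ2d
  set θ3 := theta Γ (Z - T + fun j => V j * (x:ℂ) + W j * (t:ℂ)) with hθ3d
  set θ4 := theta Γ (Z + fun j => V j * (x:ℂ) + W j * (t:ℂ)) with hθ4d
  set A := theta Γ (fun j => starRingEnd ℂ ((Z - T) j)) with hAd
  set B := theta Γ (fun j => starRingEnd ℂ (Z j)) with hBd
  set P := Complex.exp (-((Real.pi * ∑ j, (m j : ℝ) * (T j).im : ℝ):ℂ) + Complex.I * (φ:ℂ))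
    with hPd
  set P' := Complex.exp (-((Real.pi * ∑ j, (m j : ℝ) * (T j).im : ℝ):ℂ) - Complex.I * (φ:ℂ))
    with hP'd
  set E1 := Complex.exp (-(2 * Real.pi * Complex.I)
        * ∑ j, (m j:ℂ) * (Z + fun j => V j * (x:ℂ) + W j * (t:ℂ)) j
      - Real.pi * Complex.I * ∑ j, (m j:ℂ) * ∑ k', Γ j k' * (m k':ℂ)) with hE1d
  set E2 := Complex.exp (-(2 * Real.pi * Complex.I)
        * ∑ j, (m j:ℂ) * (Z - T + fun j => V j * (x:ℂ) + W j * (t:ℂ)) j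
      - Real.pi * Complex.I * ∑ j, (m j:ℂ) * ∑ k', Γ j k' * (m k':ℂ)) with hE2d
  set E := Complex.exp (Complex.I * ((e:ℂ) * (x:ℂ) + (ω:ℂ) * (t:ℂ))) with hEd
  have hP'ne : P' ≠ 0 := Complex.exp_ne_zero _
  have hE1ne : E1 ≠ 0 := Complex.exp_ne_zero _
  have h1 : (A / B * P')⁻¹ * (A / B) = P'⁻¹ := by
    field_simp
  have h2 : θ2 / θ1 * P * (θ1 / θ2) = P := by
    field_simp
  have h3 : P'⁻¹ * (E2 * θ3 / (E1 * θ4)) = -(P * (θ3 / θ4)) := by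
    field_simp
    linear_combination θ3 * hkey
  rw [h2, h1, h3]
  ring
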